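/- Let R be a commutative ring in which every h-divisible R-module is semi-regular coflat. Then every finitely generated semi-regular ideal of R is projective. -/

import Mathlib

open CategoryTheory

noncomputable section

namespace SemiregAux

open Limits

variable {C : Type*} [Category C] [Abelian C] [EnoughProjectives C]
variable {Z X₀ X₁ : C}

/-- The complex extending a given map `f : X₁ ⟶ X₀` by syzygies. -/
def ofComplex (f : X₁ ⟶ X₀) : ChainComplex C ℕ :=
  ChainComplex.mk' X₀ X₁ f (fun g => ⟨_, Projective.d g,
    (Category.assoc _ _ _).trans ((congrArg _ (kernel.condition g)).trans comp_zero)⟩)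

lemma ofComplex_d_1_0 (f : X₁ ⟶ X₀) : (ofComplex f).d 1 0 = f := by
  simp [ofComplex]

lemma ofComplex_d_2_1 (f : X₁ ⟶ X₀) : (ofComplex f).d 2 1 = Projective.d f := by
  simp [ofComplex, ChainComplex.mk']

lemma ofComplex_exactAt_succ (f : X₁ ⟶ X₀) (n : ℕ) :
    (ofComplex f).ExactAt (n + 1) := by
  rw [HomologicalComplex.exactAt_iff' _ (n + 1 + 1) (n + 1) n (by simp) (by simp)]
  have e : ShortComplex.mk (Projective.d ((ofComplex f).d (n + 1) n)) ((ofComplex f).d (n + 1) n)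
      ((Category.assoc _ _ _).trans ((congrArg _ (kernel.condition _)).trans comp_zero)) ≅
      (ofComplex f).sc' (n + 1 + 1) (n + 1) n :=
    ShortComplex.isoMk (ChainComplex.mk'XIso X₀ X₁ f (fun g => ⟨_, Projective.d g,
      (Category.assoc _ _ _).trans ((congrArg _ (kernel.condition g)).trans comp_zero)⟩) n).symm
      (Iso.refl _) (Iso.refl _)
      (((congrArg _ (ChainComplex.mk'_d _ _ _ _ n)).trans (Iso.inv_hom_id_assoc _ _)).trans
        (Category.comp_id _).symm)
      ((Category.id_comp _).trans (Category.comp_id _).symm)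
  exact ShortComplex.exact_of_iso e (exact_d_f _)

instance (f : X₁ ⟶ X₀) [Projective X₀] [Projective X₁] (n : ℕ) :
    Projective ((ofComplex f).X n) := by
  obtain (_ | _ | _ | n) := n
  · exact (inferInstance : Projective X₀)
  · exact (inferInstance : Projective X₁)
  · apply Projective.projective_over
  · apply Projective.projective_over

/-- A projective resolution built from a partial resolution `X₁ ⟶ X₀ ⟶ Z`. -/
def resolution (f : X₁ ⟶ X₀) (g : X₀ ⟶ Z) [Projective X₀] [Projective X₁] [Epi g]
    (w : f ≫ g = 0) (hfg : (ShortComplex.mk f g w).Exact) :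
    ProjectiveResolution Z where
  complex := ofComplex f
  π := (ChainComplex.toSingle₀Equiv _ _).symm ⟨g, by rw [ofComplex_d_1_0]; exact w⟩
  quasiIso := ⟨fun n => by
    cases n
    · rw [ChainComplex.quasiIsoAt₀_iff, ShortComplex.quasiIso_iff_of_zeros']
      · refine (ShortComplex.exact_and_epi_g_iff_of_iso ?_).2 ⟨hfg, by dsimp; infer_instance⟩
        exact ShortComplex.isoMk (Iso.refl _) (Iso.refl _) (Iso.refl _)
          (by simp [ofComplex_d_1_0]; exact (Category.id_comp _).trans (Category.comp_id _).symm) (by simp [ChainComplex.toSingle₀Equiv]; erw [Category.id_comp, Category.comp_id, HomologicalComplex.mkHomToSingle_f]; simp; exact (Category.comp_id g).symm)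
      all_goals rfl
    · rw [quasiIsoAt_iff_exactAt']
      · apply ofComplex_exactAt_succ
      · apply ChainComplex.exactAt_succ_single_obj⟩

lemma ext1_lifting {R : Type} [CommRing R] {Z N : ModuleCat R} (P : ProjectiveResolution Z)
    (hz : IsZero (((Ext R (ModuleCat R) 1).obj (Opposite.op Z)).obj N))
    (φ : P.complex.X 1 ⟶ N) (hφ : P.complex.d 2 1 ≫ φ = 0) :
    ∃ ψ : P.complex.X 0 ⟶ N, P.complex.d 1 0 ≫ ψ = φ := by
  have h1 : IsZero ((P.complex.linearYonedaObj R N).homology 1) :=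
    hz.of_iso (P.isoExt 1 N).symm
  have h2 := (HomologicalComplex.exactAt_iff_isZero_homology _ 1).2 h1
  rw [HomologicalComplex.exactAt_iff' _ 0 1 2 (by simp) (by simp)] at h2
  rw [ShortComplex.moduleCat_exact_iff] at h2
  obtain ⟨ψ, hψ⟩ := h2 φ (by simp [ChainComplex.linearYonedaObj_d]; exact hφ)
  exact ⟨ψ, hψ⟩

end SemiregAux

/-- An ideal is semi-regular if it contains a finitely generated subideal
with zero annihilator. -/
def Ideal.IsSemiregular {R : Type} [CommRing R] (I : Ideal R) : Prop :=
  ∃ J : Ideal R, J ≤ I ∧ J.FG ∧ Submodule.annihilator J = ⊥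

/-- A module is semi-regular flat if `Tor₁(R/I, M) = 0` for every finitely generated
semi-regular ideal `I`. -/
def IsSemiregularFlat (R : Type) [CommRing R] (M : Type) [AddCommGroup M] [Module R M] : Prop :=
  ∀ I : Ideal R, I.FG → I.IsSemiregular →
    Limits.IsZero (((Tor (ModuleCat R) 1).obj (ModuleCat.of R (R ⧸ I))).obj (ModuleCat.of R M))

/-- A module is semi-regular coflat if `Ext¹(R/I, N) = 0` for every finitely generated
semi-regular ideal `I`. -/
def IsSemiregularCoflat (R : Type) [CommRing R] (N : Type) [AddCommGroup N] [Module R N] : Prop :=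
  ∀ I : Ideal R, I.FG → I.IsSemiregular →
    Limits.IsZero (((Ext R (ModuleCat R) 1).obj
      (Opposite.op (ModuleCat.of R (R ⧸ I)))).obj (ModuleCat.of R N))

open Limits

/-- If every h-divisible `R`-module (quotient of an injective module) is semi-regular
coflat, then every finitely generated semi-regular ideal of `R` is projective. -/
theorem fg_semiregular_projective_of_hDivisible_coflat (R : Type) [CommRing R]
    (h : ∀ (N : Type) (_ : AddCommGroup N) (_ : Module R N),
      (∃ (E : ModuleCat R) (g : E →ₗ[R] N),
        Module.Injective R E ∧ Function.Surjective g) →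
      IsSemiregularCoflat R N) :
    ∀ I : Ideal R, I.FG → I.IsSemiregular → Module.Projective R I := by
  intro I hIfg hIsr
  classical
  have hfin : Module.Finite R I := Module.Finite.iff_fg.2 hIfg
  obtain ⟨n, p, hp⟩ := Module.Finite.exists_fin' R I
  let F := Fin n → R
  let flin : F →ₗ[R] R := I.subtype ∘ₗ p
  let Z : ModuleCat R := ModuleCat.of R (R ⧸ I)
  let X₀ : ModuleCat R := ModuleCat.of R R
  let X₁ : ModuleCat R := ModuleCat.of R F
  let f : X₁ ⟶ X₀ := ModuleCat.ofHom flin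
  let g : X₀ ⟶ Z := ModuleCat.ofHom I.mkQ
  have w : f ≫ g = 0 := by
    apply ModuleCat.hom_ext; apply LinearMap.ext; intro x
    exact (Submodule.Quotient.mk_eq_zero I).2 (p x).2
  have hexact : (ShortComplex.mk f g w).Exact := by
    rw [ShortComplex.moduleCat_exact_iff]
    intro x hx
    have hxI : x ∈ I := (Submodule.Quotient.mk_eq_zero I).1 hx
    obtain ⟨y, hy⟩ := hp ⟨x, hxI⟩
    refine ⟨y, ?_⟩
    show I.subtype (p y) = x
    rw [hy]
    rfl
  have hEpi : Epi g := (ModuleCat.epi_iff_surjective g).2 (Submodule.mkQ_surjective I)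
  have hP0 : Projective X₀ :=
    (IsProjective.iff_projective _).1 (Module.Projective.of_basis (Module.Basis.singleton PUnit.{1} R))
  have hP1 : Projective X₁ :=
    (IsProjective.iff_projective _).1 (Module.Projective.of_basis (Pi.basisFun R (Fin n)))
  let P : ProjectiveResolution Z := SemiregAux.resolution f g w hexact
  -- the injective envelope of the kernel and the associated h-divisible module
  let K : Submodule R F := LinearMap.ker flin
  let E : ModuleCat.{0} R := Injective.under (ModuleCat.of R K)
  let i0 : ModuleCat.of R K ⟶ E := Injective.ι _
  have hi0 : Function.Injective i0 := (ModuleCat.mono_iff_injective i0).1 inferInstance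
  have hEinj : Module.Injective R E := by
    rw [Module.injective_iff_injective_object, ModuleCat.of_coe]
    infer_instance
  let S : Submodule R E := LinearMap.range i0.hom
  have hBaer : Module.Baer R ↥E := Module.Baer.of_injective hEinj
  have hBaerU : Module.Baer R (ULift ↥E) := by
    intro J gJ
    obtain ⟨g', hg'⟩ := hBaer J (ULift.moduleEquiv.toLinearMap ∘ₗ gJ)
    refine ⟨ULift.moduleEquiv.symm.toLinearMap ∘ₗ g', fun x mem => ?_⟩
    exact ULift.down_injective (by simpa using hg' x mem)
  have hz : Limits.IsZero (((Ext R (ModuleCat R) 1).obj (Opposite.op Z)).obj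
      (ModuleCat.of R (↥E ⧸ S))) :=
    h (↥E ⧸ S) inferInstance inferInstance
      ⟨ModuleCat.of R (ULift ↥E),
        S.mkQ ∘ₗ (ULift.moduleEquiv : ULift ↥E ≃ₗ[R] ↥E).toLinearMap,
        hBaerU.injective,
        (Submodule.mkQ_surjective S).comp (ULift.moduleEquiv.surjective)⟩ I hIfg hIsr
  let N : ModuleCat R := ModuleCat.of R (↥E ⧸ S)
  -- extend the inclusion `K ↪ E` to `μ : F →ₗ[R] E`
  obtain ⟨μ, hμ⟩ := hEinj.out K.subtype (Submodule.injective_subtype K)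
    i0.hom
  let φ : X₁ ⟶ N := ModuleCat.ofHom (S.mkQ ∘ₗ μ)
  have hφ : P.complex.d 2 1 ≫ φ = 0 := by
    have hd : P.complex.d 2 1 = Projective.d f := SemiregAux.ofComplex_d_2_1 f
    have hk : kernel.ι f ≫ φ = 0 := by
      ext x
      have h0 : f ((kernel.ι f) x) = 0 := by
        simpa using ConcreteCategory.congr_hom (kernel.condition f) x
      have hv : (kernel.ι f) x ∈ K := LinearMap.mem_ker.2 h0
      show S.mkQ (μ ((kernel.ι f) x)) = 0
      have h2 : μ ((kernel.ι f) x) = i0 ⟨(kernel.ι f) x, hv⟩ := hμ ⟨(kernel.ι f) x, hv⟩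
      rw [h2]
      exact (Submodule.Quotient.mk_eq_zero S).2 ⟨⟨(kernel.ι f) x, hv⟩, rfl⟩
    rw [hd, show Projective.d f = Projective.π (kernel f) ≫ kernel.ι f from rfl,
      ]
    exact (Category.assoc _ _ _).trans ((congrArg _ hk).trans comp_zero)
  obtain ⟨ψ, hψ⟩ := SemiregAux.ext1_lifting P hz φ hφ
  have hd10 : P.complex.d 1 0 = f := SemiregAux.ofComplex_d_1_0 f
  rw [hd10] at hψ
  have hψ' : ∀ x : F, ψ (flin x) = S.mkQ (μ x) := by
    intro x
    have := congrArg (fun (m : X₁ ⟶ N) => m x) hψ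
    exact this
  obtain ⟨e, he⟩ := Submodule.mkQ_surjective S (ψ (1 : R))
  let r : F →ₗ[R] E := μ - LinearMap.smulRight flin e
  have hrS : ∀ x, r x ∈ S := by
    intro x
    have h1 : S.mkQ (r x) = 0 := by
      have h2 : ψ (flin x) = flin x • ψ (1 : R) := by
        exact (congrArg ψ.hom (mul_one (flin x)).symm).trans (map_smul ψ.hom (flin x) (1 : R))
      simp only [r, LinearMap.sub_apply, LinearMap.smulRight_apply, map_sub, map_smul, he,
        ← hψ' x, h2, sub_self]
    simpa [Submodule.Quotient.mk_eq_zero] using h1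
  let e0 : ↥(ModuleCat.of R K) ≃ₗ[R] ↥S :=
    LinearEquiv.ofInjective i0.hom hi0
  let ρ : F →ₗ[R] ↥K := e0.symm.toLinearMap ∘ₗ LinearMap.codRestrict S r hrS
  have hρ : ∀ k : ↥K, ρ (k : F) = k := by
    intro k
    have hflin : flin (k : F) = 0 := k.2
    have h1 : r (k : F) = i0 k := by
      simp only [r, LinearMap.sub_apply, LinearMap.smulRight_apply, hflin, zero_smul, sub_zero]
      exact hμ k
    show e0.symm (LinearMap.codRestrict S r hrS (k : F)) = k
    rw [LinearEquiv.symm_apply_eq]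
    ext
    exact h1
  -- build the splitting of `p : F →ₗ[R] I`
  have hKker : ∀ x : F, p x = 0 → x ∈ K := by
    intro x hx
    show flin x = 0
    simp [flin, hx]
  have hρker : ∀ x : F, x ∈ K → p ((ρ x : F)) = 0 := by
    intro x _
    have : flin ((ρ x : F)) = 0 := (ρ x).2
    exact Subtype.ext this
  let σ : F →ₗ[R] F := LinearMap.id - K.subtype ∘ₗ ρ
  have hker : LinearMap.ker p ≤ LinearMap.ker σ := by
    intro x hx
    have hxK : x ∈ K := hKker x hx
    have h1 : ρ x = ⟨x, hxK⟩ := hρ ⟨x, hxK⟩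
    show σ x = 0
    simp [σ, h1]
  let q := p.quotKerEquivOfSurjective hp
  let s : ↥I →ₗ[R] F := Submodule.liftQ (LinearMap.ker p) σ hker ∘ₗ (q.symm : ↥I →ₗ[R] _)
  have hsec : ∀ i : ↥I, p (s i) = i := by
    intro i
    obtain ⟨x, hx⟩ := hp i
    have hq : q.symm i = Submodule.Quotient.mk x := by
      rw [LinearEquiv.symm_apply_eq]
      rw [← hx]
      exact (by simp [q, LinearMap.quotKerEquivOfSurjective] :
        q (Submodule.Quotient.mk x) = p x).symm
    have hpρ : p ((ρ x : F)) = 0 := by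
      have : flin ((ρ x : F)) = 0 := (ρ x).2
      exact Subtype.ext this
    show p ((Submodule.liftQ (LinearMap.ker p) σ hker) (q.symm i)) = i
    rw [hq, Submodule.liftQ_apply]
    simp [σ, map_sub, hpρ, hx]
  have hPF : Module.Projective R F := Module.Projective.of_basis (Pi.basisFun R (Fin n))
  exact Module.Projective.of_split s p (by ext i : 1; exact hsec i)

end
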